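/- The ordinary multinomials are strongly unimodal: for N ≥ 2 and s ≥ 1, ⟨N,0⟩_s < ⟨N,1⟩_s < ⋯ < ⟨N,⌊sN/2⌋⟩_s = ⟨N,⌈sN/2⌉⟩_s > ⋯ > ⟨N,sN⟩_s. -/

import Mathlib

open Polynomial Finset

noncomputable def ordMultinomial (N s : ℕ) (k : ℤ) : ℕ :=
  if 0 ≤ k then
    (((∑ i ∈ Finset.range (s + 1), (Polynomial.X : Polynomial ℕ) ^ i)) ^ N).coeff k.toNat
  else 0

noncomputable def geomP (s : ℕ) : Polynomial ℕ := ∑ i ∈ Finset.range (s + 1), X ^ i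

lemma coeff_geomP (s n : ℕ) : (geomP s).coeff n = if n ≤ s then 1 else 0 := by
  simp only [geomP, finset_sum_coeff, coeff_X_pow]
  rw [Finset.sum_ite_eq]
  simp [Nat.lt_succ_iff]

lemma natDegree_geomP (s : ℕ) : (geomP s).natDegree ≤ s := by
  refine Polynomial.natDegree_le_iff_coeff_eq_zero.2 fun m hm => ?_
  rw [coeff_geomP]
  simp [Nat.not_le.2 hm]

lemma reflect_geomP (s : ℕ) : (geomP s).reflect s = geomP s := by
  ext n
  rw [coeff_reflect]
  by_cases h : n ≤ s
  · rw [revAt_le h, coeff_geomP, coeff_geomP, if_pos h, if_pos (Nat.sub_le _ _)]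
  · have : revAt s n = n := by
      exact revAt_eq_self_of_lt (by omega)
    rw [this]

lemma reflect_geomP_pow (s N : ℕ) : ((geomP s) ^ N).reflect (s * N) = (geomP s) ^ N := by
  induction N with
  | zero => simp
  | succ M ih =>
    have h1 : ((geomP s) ^ M).natDegree ≤ s * M := by
      refine le_trans natDegree_pow_le ?_
      calc M * (geomP s).natDegree ≤ M * s := Nat.mul_le_mul_left M (natDegree_geomP s)
        _ = s * M := Nat.mul_comm _ _
    have hms : s * (M + 1) = s * M + s := by ring
    rw [hms, pow_succ, reflect_mul _ _ h1 (natDegree_geomP s), ih, reflect_geomP]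

lemma coeff_pow_symm (s N k : ℕ) (hk : k ≤ s * N) :
    ((geomP s) ^ N).coeff k = ((geomP s) ^ N).coeff (s * N - k) := by
  conv_lhs => rw [← reflect_geomP_pow s N]
  rw [coeff_reflect, revAt_le hk]

lemma ord_ofNat (N s : ℕ) (n : ℕ) :
    ordMultinomial N s (n : ℤ) = ((geomP s) ^ N).coeff n := by
  simp [ordMultinomial, geomP]

lemma ord_neg (N s : ℕ) (k : ℤ) (h : k < 0) : ordMultinomial N s k = 0 := by
  simp [ordMultinomial, not_le.2 h]

lemma ord_rec (M s : ℕ) (k : ℤ) :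
    ordMultinomial (M + 1) s k = ∑ i ∈ Finset.range (s + 1), ordMultinomial M s (k - i) := by
  rcases lt_or_ge k 0 with hk | hk
  · rw [ord_neg _ _ _ hk]
    symm
    refine Finset.sum_eq_zero fun i _ => ord_neg _ _ _ (by omega)
  · obtain ⟨n, rfl⟩ := Int.eq_ofNat_of_zero_le hk
    rw [ord_ofNat, pow_succ,
      show (geomP s) ^ M * geomP s = ∑ i ∈ Finset.range (s + 1), (geomP s) ^ M * X ^ i by
        rw [geomP, Finset.mul_sum],
      finset_sum_coeff]
    refine Finset.sum_congr rfl fun i _ => ?_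
    rw [Polynomial.coeff_mul_X_pow']
    by_cases h : i ≤ n
    · rw [if_pos h]
      have : ((n : ℤ) - i) = ((n - i : ℕ) : ℤ) := by omega
      rw [this, ord_ofNat]
    · rw [if_neg h, ord_neg]
      omega

lemma ord_pos (N s : ℕ) (k : ℤ) (h0 : 0 ≤ k) (h1 : k ≤ (s : ℤ) * N) :
    0 < ordMultinomial N s k := by
  induction N generalizing k with
  | zero =>
    have : k = 0 := by simp at h1; omega
    subst this
    simp [ordMultinomial]
  | succ M ih =>
    rw [ord_rec]
    set i0 : ℕ := min k.toNat s with hi0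
    have hmem : i0 ∈ Finset.range (s + 1) := by
      simp only [Finset.mem_range]; omega
    have hpos : 0 < ordMultinomial M s (k - i0) := by
      refine ih _ (by omega) ?_
      have e : (s : ℤ) * ((M : ℤ) + 1) = s * M + s := by ring
      have hnn : (0 : ℤ) ≤ (s : ℤ) * M := by positivity
      push_cast at h1
      omega
    calc 0 < ordMultinomial M s (k - i0) := hpos
      _ ≤ _ := Finset.single_le_sum (f := fun i : ℕ => ordMultinomial M s (k - i))
          (fun i _ => Nat.zero_le _) hmem

lemma ord_symm (N s : ℕ) (k : ℤ) (h0 : 0 ≤ k) (h1 : k ≤ (s : ℤ) * N) :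
    ordMultinomial N s k = ordMultinomial N s ((s : ℤ) * N - k) := by
  obtain ⟨n, rfl⟩ := Int.eq_ofNat_of_zero_le h0
  have hn : n ≤ s * N := by exact_mod_cast h1
  have : ((s : ℤ) * N - n) = ((s * N - n : ℕ) : ℤ) := by push_cast; omega
  rw [this, ord_ofNat, ord_ofNat, coeff_pow_symm s N n hn]

lemma ord_diff (M s : ℕ) (k : ℤ)
    (h : ordMultinomial M s (k - s) < ordMultinomial M s (k + 1)) :
    ordMultinomial (M + 1) s k < ordMultinomial (M + 1) s (k + 1) := by
  rw [ord_rec, ord_rec]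
  rw [Finset.sum_range_succ' (fun i => ordMultinomial M s (k + 1 - i)) s]
  rw [Finset.sum_range_succ (fun i => ordMultinomial M s (k - i)) s]
  have hre : ∀ i ∈ Finset.range s,
      ordMultinomial M s (k + 1 - (i + 1 : ℕ)) = ordMultinomial M s (k - i) := by
    intro i _
    congr 1
    push_cast
    ring
  rw [Finset.sum_congr rfl hre]
  simp only [Nat.cast_zero, sub_zero]
  omega

lemma ord_chain (L s : ℕ)
    (hstep : ∀ k : ℤ, 0 ≤ k → 2 * (k + 1) ≤ (s : ℤ) * L →
      ordMultinomial L s k < ordMultinomial L s (k + 1)) :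
    ∀ a b : ℤ, 0 ≤ a → a < b → 2 * b ≤ (s : ℤ) * L →
      ordMultinomial L s a < ordMultinomial L s b := by
  have aux : ∀ n : ℕ, ∀ a : ℤ, 0 ≤ a → 2 * (a + n + 1) ≤ (s : ℤ) * L →
      ordMultinomial L s a < ordMultinomial L s (a + n + 1) := by
    intro n
    induction n with
    | zero => intro a ha h2; simpa using hstep a ha (by push_cast at h2; omega)
    | succ m ih =>
      intro a ha h2
      push_cast at h2
      have h1 : ordMultinomial L s a < ordMultinomial L s (a + m + 1) :=
        ih a ha (by push_cast; omega)
      have h3 : ordMultinomial L s (a + m + 1) < ordMultinomial L s (a + m + 1 + 1) :=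
        hstep _ (by omega) (by omega)
      have e : a + ((m : ℤ) + 1) + 1 = a + m + 1 + 1 := by ring
      push_cast
      rw [e]
      exact h1.trans h3
  intro a b ha hab h2
  obtain ⟨n, hn⟩ : ∃ n : ℕ, b = a + n + 1 := ⟨(b - a - 1).toNat, by omega⟩
  subst hn
  exact aux n a ha h2

lemma ord_key (L s : ℕ) (hs : 1 ≤ s) (hL : 1 ≤ L)
    (hchain : ∀ a b : ℤ, 0 ≤ a → a < b → 2 * b ≤ (s : ℤ) * L → 2 ≤ L →
      ordMultinomial L s a < ordMultinomial L s b)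
    (k : ℤ) (hk : 0 ≤ k) (h2 : 2 * (k + 1) ≤ (s : ℤ) * L + s) :
    ordMultinomial L s (k - s) < ordMultinomial L s (k + 1) := by
  have hs' : (1 : ℤ) ≤ s := by exact_mod_cast hs
  have hL' : (1 : ℤ) ≤ L := by exact_mod_cast hL
  have hsL : (s : ℤ) * 1 ≤ (s : ℤ) * L := by
    exact mul_le_mul_of_nonneg_left hL' (by positivity)
  rcases lt_or_ge (k - s) 0 with hneg | hpos
  · rw [ord_neg _ _ _ hneg]
    exact ord_pos L s (k + 1) (by omega) (by omega)
  · have hL2 : 2 ≤ L := by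
      by_contra hcon
      have hL1 : L = 1 := by omega
      subst hL1
      simp at h2
      omega
    have hL2' : (2 : ℤ) ≤ L := by exact_mod_cast hL2
    rcases le_or_gt (2 * (k + 1)) ((s : ℤ) * L) with hle | hgt
    · exact hchain (k - s) (k + 1) hpos (by omega) hle hL2
    · have hsym : ordMultinomial L s (k + 1) =
          ordMultinomial L s ((s : ℤ) * L - (k + 1)) :=
        ord_symm L s (k + 1) (by omega) (by omega)
      rw [hsym]
      exact hchain (k - s) ((s : ℤ) * L - (k + 1)) hpos (by omega) (by omega) hL2

lemma ord_main (N s : ℕ) (hN : 2 ≤ N) (hs : 1 ≤ s) :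
    ∀ k : ℤ, 0 ≤ k → 2 * (k + 1) ≤ (s : ℤ) * N →
      ordMultinomial N s k < ordMultinomial N s (k + 1) := by
  obtain ⟨M, rfl⟩ : ∃ M, N = M + 2 := ⟨N - 2, by omega⟩
  clear hN
  induction M with
  | zero =>
    intro k hk h2
    push_cast at h2
    refine ord_diff 1 s k (ord_key 1 s hs le_rfl (fun a b _ _ _ h => by omega) k hk ?_)
    push_cast
    omega
  | succ M ih =>
    intro k hk h2
    push_cast at h2
    have e : (s : ℤ) * ((M : ℤ) + 1 + 2) = (s : ℤ) * ((M : ℤ) + 2) + s := by ring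
    refine ord_diff (M + 2) s k (ord_key (M + 2) s hs (by omega) ?_ k hk ?_)
    · intro a b ha hab hb _
      refine ord_chain (M + 2) s (fun j hj hj2 => ih j hj ?_) a b ha hab hb
      · push_cast at hj2 ⊢; omega
    · push_cast; omega

theorem stmt_9 (N s : ℕ) (hN : 2 ≤ N) (hs : 1 ≤ s) :
    (∀ k : ℕ, k < s * N / 2 → ordMultinomial N s k < ordMultinomial N s (k + 1)) ∧
      ordMultinomial N s (s * N / 2) = ordMultinomial N s ((s * N + 1) / 2) ∧
      ∀ k : ℕ, (s * N + 1) / 2 ≤ k → k < s * N →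
        ordMultinomial N s (k + 1) < ordMultinomial N s k := by
  have hsN : (0 : ℤ) ≤ (s : ℤ) * N := by positivity
  refine ⟨?_, ?_, ?_⟩
  · intro k hk
    refine ord_main N s hN hs k (by positivity) ?_
    have h' : 2 * (k + 1) ≤ s * N := by omega
    exact_mod_cast h'
  · have h := ord_symm N s ((s : ℤ) * N / 2) (by omega) (by omega)
    rw [h]
    congr 1
    omega
  · intro k hk1 hk2
    have hcast : 2 * ((s : ℤ) * N) ≤ 4 * k + 2 ∧ (k : ℤ) < (s : ℤ) * N := by
      constructor
      · have : s * N ≤ 2 * k := by omega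
        have := (Int.ofNat_le.2 this)
        push_cast at this ⊢
        omega
      · exact_mod_cast hk2
    obtain ⟨hc1, hc2⟩ := hcast
    have e1 : ordMultinomial N s ((k : ℤ) + 1) =
        ordMultinomial N s ((s : ℤ) * N - ((k : ℤ) + 1)) :=
      ord_symm N s ((k : ℤ) + 1) (by positivity) (by omega)
    have e2 : ordMultinomial N s (k : ℤ) =
        ordMultinomial N s ((s : ℤ) * N - k) :=
      ord_symm N s (k : ℤ) (by positivity) (by omega)
    rw [e1, e2]
    have hmain := ord_main N s hN hs ((s : ℤ) * N - (k + 1)) (by omega) (by omega)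
    have e3 : (s : ℤ) * N - (k + 1) + 1 = (s : ℤ) * N - k := by ring
    rw [e3] at hmain
    exact hmain
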